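/- The condition number μ is unitarily and scale invariant: for every unitary matrix U ∈ U(n), every A ∈ ℂ^{n×n}, λ ∈ ℂ and nonzero v ∈ ℂ^n with A_{λ,v} invertible, the map (UAU^{-1})_{λ,Uv} is invertible and μ(UAU^{-1}, λ, Uv) = μ(A,λ,v); moreover, for every nonzero real number s, μ(sA, sλ, v) = μ(A,λ,v). -/

import Mathlib

noncomputable section

open Matrix Set

/-- `T_v`: the orthogonal complement of `v` in `ℂ^n`. -/
def Tv {n : ℕ} (v : EuclideanSpace ℂ (Fin n)) : Submodule ℂ (EuclideanSpace ℂ (Fin n)) :=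
  (ℂ ∙ v)ᗮ

/-- The linear map `A_{λ,v} : T_v → T_v`, `x ↦ P_{v⊥}((A - λ·Id) x)`. -/
def Alv {n : ℕ} (A : Matrix (Fin n) (Fin n) ℂ) (lam : ℂ) (v : EuclideanSpace ℂ (Fin n)) :
    Tv v →ₗ[ℂ] Tv v :=
  (Submodule.orthogonalProjectionOnto (Tv v)).toLinearMap ∘ₗ
    (Matrix.toEuclideanLin A - lam • LinearMap.id) ∘ₗ (Tv v).subtype

/-- `A_{λ,v}` as a continuous linear map. -/
def AlvC {n : ℕ} (A : Matrix (Fin n) (Fin n) ℂ) (lam : ℂ) (v : EuclideanSpace ℂ (Fin n)) :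
    Tv v →L[ℂ] Tv v :=
  LinearMap.toContinuousLinearMap (Alv A lam v)

/-- Frobenius norm of a complex matrix. -/
def frobNorm {n : ℕ} (A : Matrix (Fin n) (Fin n) ℂ) : ℝ :=
  Real.sqrt (∑ i, ∑ j, ‖A i j‖ ^ 2)

/-- The condition number `μ(A,λ,v) = ‖A‖_F ‖A_{λ,v}^{-1}‖`. -/
def mu {n : ℕ} (A : Matrix (Fin n) (Fin n) ℂ) (lam : ℂ) (v : EuclideanSpace ℂ (Fin n)) : ℝ :=
  frobNorm A * ‖(AlvC A lam v).inverse‖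

/-- Fubini-Study (angular) distance. -/
def dP {n : ℕ} (v w : EuclideanSpace ℂ (Fin n)) : ℝ :=
  Real.arccos (‖(inner ℂ v w : ℂ)‖ / (‖v‖ * ‖w‖))

/-- The distance on triples. -/
def distT {n : ℕ} (A : Matrix (Fin n) (Fin n) ℂ) (lam : ℂ) (v : EuclideanSpace ℂ (Fin n))
    (A' : Matrix (Fin n) (Fin n) ℂ) (lam' : ℂ) (v' : EuclideanSpace ℂ (Fin n)) : ℝ :=
  Real.sqrt ((frobNorm ((frobNorm A)⁻¹ • A - (frobNorm A')⁻¹ • A')) ^ 2 +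
    ‖lam / (frobNorm A : ℂ) - lam' / (frobNorm A' : ℂ)‖ ^ 2 + dP v v' ^ 2)

-- ===== auxiliary lemmas =====

lemma tEL_mul {n : ℕ} (M N : Matrix (Fin n) (Fin n) ℂ) :
    toEuclideanLin (M * N) = (toEuclideanLin M) ∘ₗ (toEuclideanLin N) := by
  ext x; simp [toEuclideanLin_apply, mulVec_mulVec]

lemma tEL_one {n : ℕ} : toEuclideanLin (1 : Matrix (Fin n) (Fin n) ℂ) = LinearMap.id := by
  ext x; simp [toEuclideanLin_apply]

/-- unitary matrix as a linear isometry equivalence of Euclidean space -/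
def eU {n : ℕ} (U : Matrix (Fin n) (Fin n) ℂ) (hU : U ∈ Matrix.unitaryGroup (Fin n) ℂ) :
    EuclideanSpace ℂ (Fin n) ≃ₗᵢ[ℂ] EuclideanSpace ℂ (Fin n) where
  toLinearEquiv := LinearEquiv.ofLinear (toEuclideanLin U) (toEuclideanLin Uᴴ)
    (by rw [← tEL_mul, ← Matrix.star_eq_conjTranspose,
          (Matrix.mem_unitaryGroup_iff.mp hU : U * star U = 1), tEL_one])
    (by rw [← tEL_mul, ← Matrix.star_eq_conjTranspose,
          (Matrix.mem_unitaryGroup_iff'.mp hU : star U * U = 1), tEL_one])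
  norm_map' := by
    intro x
    have h : ∀ y : EuclideanSpace ℂ (Fin n),
        (inner ℂ (toEuclideanLin U x) y : ℂ) = inner ℂ x (toEuclideanLin Uᴴ y) := by
      intro y
      rw [Matrix.toEuclideanLin_conjTranspose_eq_adjoint, LinearMap.adjoint_inner_right]
    have h2 : (inner ℂ (toEuclideanLin U x) (toEuclideanLin U x) : ℂ) = inner ℂ x x := by
      rw [h, ← LinearMap.comp_apply, ← tEL_mul, ← Matrix.star_eq_conjTranspose,
        (Matrix.mem_unitaryGroup_iff'.mp hU : star U * U = 1), tEL_one]
      rfl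
    have h3 : ‖(toEuclideanLin U x : EuclideanSpace ℂ (Fin n))‖ ^ 2 = ‖x‖ ^ 2 := by
      rw [← inner_self_eq_norm_sq (𝕜 := ℂ), ← inner_self_eq_norm_sq (𝕜 := ℂ), h2]
    exact (sq_eq_sq₀ (norm_nonneg _) (norm_nonneg _)).mp h3

lemma eU_apply {n : ℕ} (U : Matrix (Fin n) (Fin n) ℂ) (hU : U ∈ Matrix.unitaryGroup (Fin n) ℂ)
    (x : EuclideanSpace ℂ (Fin n)) : eU U hU x = toEuclideanLin U x := rfl

lemma eU_symm_apply {n : ℕ} (U : Matrix (Fin n) (Fin n) ℂ) (hU : U ∈ Matrix.unitaryGroup (Fin n) ℂ)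
    (x : EuclideanSpace ℂ (Fin n)) : (eU U hU).symm x = toEuclideanLin Uᴴ x := rfl

/-- orthogonal complement commutes with the image under a linear isometry equivalence -/
lemma orthogonal_map {n : ℕ} (f : EuclideanSpace ℂ (Fin n) ≃ₗᵢ[ℂ] EuclideanSpace ℂ (Fin n))
    (K : Submodule ℂ (EuclideanSpace ℂ (Fin n))) :
    (K.map (f.toLinearEquiv : EuclideanSpace ℂ (Fin n) →ₗ[ℂ] EuclideanSpace ℂ (Fin n)))ᗮ
      = Kᗮ.map (f.toLinearEquiv : EuclideanSpace ℂ (Fin n) →ₗ[ℂ] EuclideanSpace ℂ (Fin n)) := by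
  ext x
  simp only [Submodule.mem_orthogonal, Submodule.mem_map]
  constructor
  · intro h
    refine ⟨f.symm x, fun u hu => ?_, by simp⟩
    have h2 := h (f u) ⟨u, hu, rfl⟩
    rw [← f.apply_symm_apply x, f.inner_map_map] at h2
    exact h2
  · rintro ⟨y, hy, rfl⟩ u hu
    obtain ⟨w, hw, rfl⟩ := hu
    simpa [f.inner_map_map] using hy w hw

lemma Tv_map {n : ℕ} (f : EuclideanSpace ℂ (Fin n) ≃ₗᵢ[ℂ] EuclideanSpace ℂ (Fin n))
    (v : EuclideanSpace ℂ (Fin n)) :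
    Tv (f v) = (Tv v).map (f.toLinearEquiv : EuclideanSpace ℂ (Fin n) →ₗ[ℂ] _) := by
  rw [Tv, Tv, ← orthogonal_map]
  congr 1
  rw [Submodule.map_span]
  simp

/-- restriction of a linear isometry equivalence to `Tv v ≃ Tv (f v)` -/
def fres {n : ℕ} (f : EuclideanSpace ℂ (Fin n) ≃ₗᵢ[ℂ] EuclideanSpace ℂ (Fin n))
    (v : EuclideanSpace ℂ (Fin n)) : Tv v ≃ₗᵢ[ℂ] Tv (f v) where
  toLinearEquiv :=
    ((Tv v).equivMapOfInjective (f.toLinearEquiv : EuclideanSpace ℂ (Fin n) →ₗ[ℂ] _)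
      f.injective).trans (LinearEquiv.ofEq _ _ (Tv_map f v).symm)
  norm_map' := by
    intro x
    rw [Submodule.coe_norm, Submodule.coe_norm]
    exact f.norm_map (x : EuclideanSpace ℂ (Fin n))

lemma fres_coe {n : ℕ} (f : EuclideanSpace ℂ (Fin n) ≃ₗᵢ[ℂ] EuclideanSpace ℂ (Fin n))
    (v : EuclideanSpace ℂ (Fin n)) (x : Tv v) : ((fres f v x : Tv (f v)) : EuclideanSpace ℂ (Fin n)) = f x := rfl

lemma fres_symm_coe {n : ℕ} (f : EuclideanSpace ℂ (Fin n) ≃ₗᵢ[ℂ] EuclideanSpace ℂ (Fin n))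
    (v : EuclideanSpace ℂ (Fin n)) (x : Tv (f v)) :
    (((fres f v).symm x : Tv v) : EuclideanSpace ℂ (Fin n)) = f.symm x := by
  apply f.injective
  rw [f.apply_symm_apply, ← fres_coe f v, LinearIsometryEquiv.apply_symm_apply]

end

noncomputable section
open Matrix

lemma proj_congr {n : ℕ} {p q : Submodule ℂ (EuclideanSpace ℂ (Fin n))} (h : p = q)
    (x : EuclideanSpace ℂ (Fin n)) :
    (Submodule.orthogonalProjectionOnto p x : EuclideanSpace ℂ (Fin n)) = Submodule.orthogonalProjectionOnto q x := by
  subst h; rfl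

lemma frob_trace {n : ℕ} (A : Matrix (Fin n) (Fin n) ℂ) :
    (∑ i, ∑ j, ‖A i j‖ ^ 2 : ℝ) = (Matrix.trace (Aᴴ * A)).re := by
  rw [Matrix.trace]
  simp only [Matrix.diag_apply, Matrix.mul_apply, Matrix.conjTranspose_apply]
  rw [Complex.re_sum, Finset.sum_comm]
  congr 1; ext i
  rw [Complex.re_sum]
  congr 1; ext j
  rw [show (star (A j i) * A j i) = (starRingEnd ℂ) (A j i) * A j i from rfl,
    ← Complex.normSq_eq_conj_mul_self]
  simp [Complex.normSq_eq_norm_sq, ← Complex.ofReal_pow]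

lemma frob_conj {n : ℕ} (U A : Matrix (Fin n) (Fin n) ℂ)
    (hU : U ∈ Matrix.unitaryGroup (Fin n) ℂ) :
    frobNorm (U * A * U⁻¹) = frobNorm A := by
  have hUinv : U⁻¹ = Uᴴ := Matrix.inv_eq_right_inv
    (by rw [← Matrix.star_eq_conjTranspose]; exact Matrix.mem_unitaryGroup_iff.mp hU)
  have hU' : Uᴴ * U = 1 := by
    rw [← Matrix.star_eq_conjTranspose]; exact Matrix.mem_unitaryGroup_iff'.mp hU
  have key : (U * A * Uᴴ)ᴴ * (U * A * Uᴴ) = U * (Aᴴ * A) * Uᴴ := by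
    calc (U * A * Uᴴ)ᴴ * (U * A * Uᴴ) = U * Aᴴ * ((Uᴴ * U) * (A * Uᴴ)) := by
          simp [Matrix.conjTranspose_mul, Matrix.mul_assoc]
      _ = U * (Aᴴ * A) * Uᴴ := by rw [hU']; simp [Matrix.mul_assoc]
  unfold frobNorm
  rw [frob_trace, frob_trace, hUinv, key, Matrix.trace_mul_comm, ← Matrix.mul_assoc, hU',
    Matrix.one_mul]

set_option maxHeartbeats 1000000 in
/-- the key conjugation identity (pointwise), for an abstract isometry -/
lemma Alv_conj_gen {n : ℕ} (A B : Matrix (Fin n) (Fin n) ℂ) (lam : ℂ)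
    (v : EuclideanSpace ℂ (Fin n))
    (f : EuclideanSpace ℂ (Fin n) ≃ₗᵢ[ℂ] EuclideanSpace ℂ (Fin n))
    (hB : ∀ y, Matrix.toEuclideanLin B y = f (Matrix.toEuclideanLin A (f.symm y)))
    (x : Tv (f v)) :
    Alv B lam (f v) x = fres f v (Alv A lam v ((fres f v).symm x)) := by
  set g : EuclideanSpace ℂ (Fin n) →ₗ[ℂ] EuclideanSpace ℂ (Fin n) :=
    Matrix.toEuclideanLin A - lam • LinearMap.id with hg
  set gB : EuclideanSpace ℂ (Fin n) →ₗ[ℂ] EuclideanSpace ℂ (Fin n) :=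
    Matrix.toEuclideanLin B - lam • LinearMap.id with hgB
  apply Subtype.ext
  set w : EuclideanSpace ℂ (Fin n) := g (f.symm (x : EuclideanSpace ℂ (Fin n))) with hw
  have hmid : gB (x : EuclideanSpace ℂ (Fin n)) = f w := by
    rw [hw, hg, hgB]
    simp only [LinearMap.sub_apply, LinearMap.smul_apply, LinearMap.id_apply, map_sub]
    rw [hB]
    congr 1
    rw [f.map_smul, f.apply_symm_apply]
  calc ((Alv B lam (f v) x : Tv (f v)) : EuclideanSpace ℂ (Fin n))
      = (Submodule.orthogonalProjectionOnto (Tv (f v)) (gB (x : EuclideanSpace ℂ (Fin n))) :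
          EuclideanSpace ℂ (Fin n)) := rfl
    _ = (Submodule.orthogonalProjectionOnto ((Tv v).map
          (f.toLinearEquiv : EuclideanSpace ℂ (Fin n) →ₗ[ℂ] _)) (f w) :
            EuclideanSpace ℂ (Fin n)) := by rw [hmid, proj_congr (Tv_map f v)]
    _ = f (Submodule.orthogonalProjectionOnto (Tv v) (f.symm (f w))) :=
        Submodule.starProjection_map_apply f (Tv v) (f w)
    _ = f (Submodule.orthogonalProjectionOnto (Tv v) w) := by rw [f.symm_apply_apply]
    _ = _ := by
        rw [fres_coe]
        congr 1
        show (Submodule.orthogonalProjectionOnto (Tv v) w : EuclideanSpace ℂ (Fin n)) =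
          (Submodule.orthogonalProjectionOnto (Tv v)
            (g (((fres f v).symm x : Tv v) : EuclideanSpace ℂ (Fin n))) :
              EuclideanSpace ℂ (Fin n))
        rw [hw, fres_symm_coe]

lemma Alv_conj {n : ℕ} (U A : Matrix (Fin n) (Fin n) ℂ) (lam : ℂ)
    (v : EuclideanSpace ℂ (Fin n)) (hU : U ∈ Matrix.unitaryGroup (Fin n) ℂ)
    (x : Tv (eU U hU v)) :
    Alv (U * A * U⁻¹) lam (eU U hU v) x =
      fres (eU U hU) v (Alv A lam v ((fres (eU U hU) v).symm x)) := by
  have hUinv : U⁻¹ = Uᴴ := Matrix.inv_eq_right_inv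
    (by rw [← Matrix.star_eq_conjTranspose]; exact Matrix.mem_unitaryGroup_iff.mp hU)
  refine Alv_conj_gen A (U * A * U⁻¹) lam v (eU U hU) (fun y => ?_) x
  rw [hUinv, tEL_mul, tEL_mul]
  rfl
end

noncomputable section
open Matrix

lemma frob_smul {n : ℕ} (s : ℝ) (A : Matrix (Fin n) (Fin n) ℂ) :
    frobNorm (s • A) = |s| * frobNorm A := by
  unfold frobNorm
  have h : ∀ i j : Fin n, ‖(s • A) i j‖ ^ 2 = s ^ 2 * ‖A i j‖ ^ 2 := by
    intro i j
    rw [Matrix.smul_apply, norm_smul, Real.norm_eq_abs, mul_pow, sq_abs]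
  simp_rw [h, ← Finset.mul_sum]
  rw [Real.sqrt_mul (sq_nonneg s), Real.sqrt_sq_eq_abs]

lemma opnorm_smul_eq {n : ℕ} {p : Submodule ℂ (EuclideanSpace ℂ (Fin n))} (c : ℂ)
    (hc : c ≠ 0) (f : p →L[ℂ] p) : ‖c • f‖ = ‖c‖ * ‖f‖ := by
  refine le_antisymm (ContinuousLinearMap.opNorm_smul_le c f) ?_
  have h := ContinuousLinearMap.opNorm_smul_le c⁻¹ (c • f)
  rw [smul_smul, inv_mul_cancel₀ hc, one_smul, norm_inv] at h
  have hc' : (0 : ℝ) < ‖c‖ := norm_pos_iff.mpr hc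
  calc ‖c‖ * ‖f‖ ≤ ‖c‖ * (‖c‖⁻¹ * ‖c • f‖) :=
        mul_le_mul_of_nonneg_left h (norm_nonneg c)
    _ = ‖c • f‖ := by
        rw [← mul_assoc, mul_inv_cancel₀ (ne_of_gt hc'), one_mul]

lemma liCLE_coe {n : ℕ} {p q : Submodule ℂ (EuclideanSpace ℂ (Fin n))} (e : p ≃ₗᵢ[ℂ] q) :
    ⇑e.toContinuousLinearEquiv = ⇑e := rfl

lemma liCLE_symm_coe {n : ℕ} {p q : Submodule ℂ (EuclideanSpace ℂ (Fin n))} (e : p ≃ₗᵢ[ℂ] q) :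
    ⇑e.toContinuousLinearEquiv.symm = ⇑e.symm := rfl


set_option maxHeartbeats 1000000 in
set_option synthInstance.maxHeartbeats 200000 in
/-- Remark: `μ` is invariant under unitary conjugation and under real scaling
`(A,λ) ↦ (sA, sλ)`. -/
theorem mu_unitary_and_scale_invariant {n : ℕ} (A : Matrix (Fin n) (Fin n) ℂ)
    (lam : ℂ) (v : EuclideanSpace ℂ (Fin n)) (hv : v ≠ 0)
    (hinv : Function.Bijective (Alv A lam v)) :
    (∀ U : Matrix (Fin n) (Fin n) ℂ, U ∈ Matrix.unitaryGroup (Fin n) ℂ →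
      Function.Bijective (Alv (U * A * U⁻¹) lam (Matrix.toEuclideanLin U v)) ∧
        mu (U * A * U⁻¹) lam (Matrix.toEuclideanLin U v) = mu A lam v) ∧
    ∀ s : ℝ, s ≠ 0 → mu (s • A) (s * lam) v = mu A lam v := by
  let eA : Tv v ≃L[ℂ] Tv v :=
    (LinearEquiv.ofBijective (Alv A lam v) hinv).toContinuousLinearEquiv
  have hA_apply : ∀ y : Tv v, eA y = Alv A lam v y := by
    intro y
    simp only [eA, LinearEquiv.coe_toContinuousLinearEquiv', LinearEquiv.ofBijective_apply]
  have hAC : (eA : Tv v →L[ℂ] Tv v) = AlvC A lam v := by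
    refine ContinuousLinearMap.ext fun x => ?_
    rw [ContinuousLinearEquiv.coe_coe, hA_apply]
    rfl
  constructor
  · intro U hU
    have hfun : ⇑(Alv (U * A * U⁻¹) lam (eU U hU v)) =
        (⇑(fres (eU U hU) v)) ∘ (⇑(Alv A lam v)) ∘ (⇑((fres (eU U hU) v).symm)) :=
      funext (Alv_conj U A lam v hU)
    have hbij : Function.Bijective (Alv (U * A * U⁻¹) lam (eU U hU v)) := by
      rw [hfun]
      exact ((fres (eU U hU) v).bijective.comp hinv).comp (fres (eU U hU) v).symm.bijective
    refine ⟨hbij, ?_⟩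
    let fCE : Tv v ≃L[ℂ] Tv (eU U hU v) := (fres (eU U hU) v).toContinuousLinearEquiv
    let eB : Tv (eU U hU v) ≃L[ℂ] Tv (eU U hU v) := (fCE.symm.trans eA).trans fCE
    have hBC : (eB : Tv (eU U hU v) →L[ℂ] Tv (eU U hU v)) =
        AlvC (U * A * U⁻¹) lam (eU U hU v) := by
      refine ContinuousLinearMap.ext fun x => ?_
      show fCE (eA (fCE.symm x)) = AlvC (U * A * U⁻¹) lam (eU U hU v) x
      rw [show AlvC (U * A * U⁻¹) lam (eU U hU v) x
          = Alv (U * A * U⁻¹) lam (eU U hU v) x from rfl,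
        Alv_conj U A lam v hU x, hA_apply]
      rw [show fCE.symm x = (fres (eU U hU) v).symm x from congrFun (liCLE_symm_coe _) x]
      rfl
    have hsymm : (eB.symm : Tv (eU U hU v) →L[ℂ] Tv (eU U hU v)) =
        ((fres (eU U hU) v).toLinearIsometry.toContinuousLinearMap).comp
          ((eA.symm : Tv v →L[ℂ] Tv v).comp
            ((fres (eU U hU) v).symm.toLinearIsometry.toContinuousLinearMap)) := by
      refine ContinuousLinearMap.ext fun x => ?_
      show fCE (eA.symm (fCE.symm x)) =
        (fres (eU U hU) v) (eA.symm ((fres (eU U hU) v).symm x))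
      rw [show fCE.symm x = (fres (eU U hU) v).symm x from congrFun (liCLE_symm_coe _) x]
      rfl
    show mu (U * A * U⁻¹) lam (eU U hU v) = mu A lam v
    rw [mu, mu, frob_conj U A hU]
    congr 1
    rw [← hAC, ← hBC, ContinuousLinearMap.inverse_equiv, ContinuousLinearMap.inverse_equiv,
      hsymm, (fres (eU U hU) v).toLinearIsometry.norm_toContinuousLinearMap_comp]
    exact ContinuousLinearMap.opNorm_comp_linearIsometryEquiv _ ((fres (eU U hU) v).symm)
  · intro s hs
    have hC : ((s : ℂ)) ≠ 0 := by exact_mod_cast hs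
    have hsA : s • A = ((s : ℂ)) • A := by
      ext i j; simp [Matrix.smul_apply, Complex.real_smul]
    have hAlvMap : Alv (s • A) ((s : ℂ) * lam) v = (s : ℂ) • Alv A lam v := by
      unfold Alv
      rw [hsA, _root_.map_smul,
        show ((s : ℂ) * lam) • (LinearMap.id :
            EuclideanSpace ℂ (Fin n) →ₗ[ℂ] EuclideanSpace ℂ (Fin n))
          = (s : ℂ) • (lam • LinearMap.id) from by rw [smul_smul],
        ← smul_sub, LinearMap.smul_comp, LinearMap.comp_smul]
    have hAlv : ∀ x : Tv v, Alv (s • A) ((s : ℂ) * lam) v x = (s : ℂ) • Alv A lam v x := by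
      intro x
      rw [hAlvMap, LinearMap.smul_apply]
    have hbijS : Function.Bijective (Alv (s • A) ((s : ℂ) * lam) v) := by
      rw [show ⇑(Alv (s • A) ((s : ℂ) * lam) v) =
        (fun y : Tv v => (s : ℂ) • y) ∘ ⇑(Alv A lam v) from funext hAlv]
      have hsmul : Function.Bijective (fun y : Tv v => (s : ℂ) • y) := by
        constructor
        · intro a b hab
          exact smul_right_injective _ hC hab
        · intro y
          exact ⟨(s : ℂ)⁻¹ • y, by simp [smul_smul, mul_inv_cancel₀ hC]⟩
      exact hsmul.comp hinv
    let eS : Tv v ≃L[ℂ] Tv v :=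
      (LinearEquiv.ofBijective (Alv (s • A) ((s : ℂ) * lam) v) hbijS).toContinuousLinearEquiv
    have hS_apply : ∀ y : Tv v, eS y = Alv (s • A) ((s : ℂ) * lam) v y := by
      intro y
      simp only [eS, LinearEquiv.coe_toContinuousLinearEquiv', LinearEquiv.ofBijective_apply]
    have hSC : (eS : Tv v →L[ℂ] Tv v) = AlvC (s • A) ((s : ℂ) * lam) v := by
      refine ContinuousLinearMap.ext fun x => ?_
      rw [ContinuousLinearEquiv.coe_coe, hS_apply]
      rfl
    have hsymmS : (eS.symm : Tv v →L[ℂ] Tv v) = (s : ℂ)⁻¹ • (eA.symm : Tv v →L[ℂ] Tv v) := by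
      refine ContinuousLinearMap.ext fun x => ?_
      rw [ContinuousLinearMap.smul_apply, ContinuousLinearEquiv.coe_coe,
        ContinuousLinearEquiv.coe_coe]
      have h1 : eS ((s : ℂ)⁻¹ • eA.symm x) = x := by
        rw [hS_apply, hAlv, _root_.map_smul, smul_smul, mul_inv_cancel₀ hC, one_smul]
        rw [← hA_apply]
        exact eA.apply_symm_apply x
      calc eS.symm x = eS.symm (eS ((s : ℂ)⁻¹ • eA.symm x)) := by rw [h1]
        _ = (s : ℂ)⁻¹ • eA.symm x := eS.symm_apply_apply _
    rw [mu, mu, ← hSC, ← hAC, ContinuousLinearMap.inverse_equiv,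
      ContinuousLinearMap.inverse_equiv, hsymmS,
      opnorm_smul_eq ((s : ℂ)⁻¹) (inv_ne_zero hC) (eA.symm : Tv v →L[ℂ] Tv v), frob_smul]
    have habs : ‖((s : ℂ))⁻¹‖ = |s|⁻¹ := by
      rw [norm_inv, Complex.norm_real, Real.norm_eq_abs]
    rw [habs]
    have h0 : |s| ≠ 0 := abs_ne_zero.mpr hs
    field_simp

end
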